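/- arXiv:1201.1847 — 4 statements merged into one kernel-verified Lean document; each statement's English description precedes it below -/
import Mathlib

section
/- Suppose B satisfies sup_{w ∈ W, w ≠ 0} B(w,u)/‖w‖_W ≥ C₃‖u‖_U for all u ∈ U with C₃ > 0. Then the bilinear form A(v,u) := ⟨Tv, Tu⟩_W is coercive: A(u,u) ≥ C₃²‖u‖_U² for all u ∈ U. -/
open scoped RealInnerProductSpace

theorem stmt3 {U W : Type*}
    [NormedAddCommGroup U] [InnerProductSpace ℝ U] [CompleteSpace U]
    [NormedAddCommGroup W] [InnerProductSpace ℝ W] [CompleteSpace W]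
    (B : W →ₗ[ℝ] U →ₗ[ℝ] ℝ) (C₃ : ℝ) (hC₃ : 0 < C₃)
    (hinfsup : ∀ u : U, C₃ * ‖u‖ ≤ ⨆ w : {w : W // w ≠ 0}, B w.1 u / ‖w.1‖)
    (T : U → W) (hT : ∀ (w : W) (u : U), ⟪w, T u⟫ = B w u) :
    ∀ u : U, C₃ ^ 2 * ‖u‖ ^ 2 ≤ ⟪T u, T u⟫ := by
  intro u
  have h1 : C₃ * ‖u‖ ≤ ‖T u‖ := by
    refine (hinfsup u).trans (Real.iSup_le ?_ (norm_nonneg _))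
    rintro ⟨w, hw⟩
    have hwpos : 0 < ‖w‖ := norm_pos_iff.mpr hw
    rw [div_le_iff₀ hwpos, ← hT w u]
    calc ⟪w, T u⟫ ≤ ‖w‖ * ‖T u‖ := real_inner_le_norm w (T u)
      _ = ‖T u‖ * ‖w‖ := mul_comm _ _
  have h2 : (C₃ * ‖u‖) ^ 2 ≤ ‖T u‖ ^ 2 :=
    pow_le_pow_left₀ (mul_nonneg hC₃.le (norm_nonneg _)) h1 2
  rw [real_inner_self_eq_norm_sq]
  calc C₃ ^ 2 * ‖u‖ ^ 2 = (C₃ * ‖u‖) ^ 2 := (mul_pow _ _ _).symm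
    _ ≤ ‖T u‖ ^ 2 := h2
end

section
/- Suppose B satisfies the three conditions: continuity with constant C₁, inf-sup over u with constant C₂, and inf-sup over w with constant C₃ (all positive). Equip W with the optimal test space norm |||w|||_W := ‖T*w‖_U. Then for every u ∈ U, the energy norm with respect to this test norm equals the original trial norm: sup over nonzero w ∈ W of B(w,u)/|||w|||_W = ‖u‖_U. -/
open scoped RealInnerProductSpace

theorem stmt9 {U W : Type*}
    [NormedAddCommGroup U] [InnerProductSpace ℝ U] [CompleteSpace U]
    [NormedAddCommGroup W] [InnerProductSpace ℝ W] [CompleteSpace W]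
    (B : W →ₗ[ℝ] U →ₗ[ℝ] ℝ) (C₁ C₂ C₃ : ℝ)
    (hC₁ : 0 < C₁) (hC₂ : 0 < C₂) (hC₃ : 0 < C₃)
    (hB : ∀ (w : W) (u : U), B w u ≤ C₁ * ‖w‖ * ‖u‖)
    (hinfsup₂ : ∀ w : W, C₂ * ‖w‖ ≤ ⨆ u : {u : U // u ≠ 0}, B w u.1 / ‖u.1‖)
    (hinfsup₃ : ∀ u : U, C₃ * ‖u‖ ≤ ⨆ w : {w : W // w ≠ 0}, B w.1 u / ‖w.1‖)
    (Ts : W → U) (hTs : ∀ (w : W) (u : U), ⟪Ts w, u⟫ = B w u) :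
    ∀ u : U, (⨆ w : {w : W // w ≠ 0}, B w.1 u / ‖Ts w.1‖) = ‖u‖ := by
  classical
  have hadd : ∀ w w' : W, Ts (w + w') = Ts w + Ts w' := by
    intro w w'
    apply ext_inner_right ℝ
    intro x
    simp [hTs, inner_add_left]
  have hsmul : ∀ (c : ℝ) (w : W), Ts (c • w) = c • Ts w := by
    intro c w
    apply ext_inner_right ℝ
    intro x
    simp [hTs, real_inner_smul_left]
  set Tlin : W →ₗ[ℝ] U := { toFun := Ts, map_add' := hadd, map_smul' := hsmul } with hTlin
  have hTs0 : Ts (0 : W) = 0 := by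
    have := Tlin.map_zero
    simpa [hTlin] using this
  set R := LinearMap.range Tlin with hR
  have hbot : Rᗮ = ⊥ := by
    rw [Submodule.eq_bot_iff]
    intro v hv
    have hz : ∀ w : W, (B w) v = 0 := by
      intro w
      rw [← hTs]
      exact (Submodule.mem_orthogonal R v).mp hv (Ts w) ⟨w, rfl⟩
    have hsup : (⨆ w : {w : W // w ≠ 0}, B w.1 v / ‖w.1‖) ≤ 0 := by
      apply Real.iSup_le _ le_rfl
      intro w
      simp [hz]
    have := hinfsup₃ v
    have : ‖v‖ ≤ 0 := by nlinarith
    exact norm_le_zero_iff.mp this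
  have hdense : R.topologicalClosure = ⊤ :=
    Submodule.topologicalClosure_eq_top_iff.mpr hbot
  intro u
  have hub : ∀ w : {w : W // w ≠ 0}, B w.1 u / ‖Ts w.1‖ ≤ ‖u‖ := by
    intro w
    rcases eq_or_ne (Ts w.1) 0 with h | h
    · rw [← hTs, h]
      simp
    · rw [div_le_iff₀ (norm_pos_iff.mpr h), ← hTs, mul_comm]
      exact real_inner_le_norm _ _
  have hbdd : BddAbove (Set.range fun w : {w : W // w ≠ 0} => B w.1 u / ‖Ts w.1‖) := by
    refine ⟨‖u‖, ?_⟩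
    rintro x ⟨w, rfl⟩
    exact hub w
  refine le_antisymm (Real.iSup_le hub (norm_nonneg u)) ?_
  by_cases hu : u = 0
  · subst hu
    simp only [norm_zero]
    apply Real.iSup_nonneg
    intro w
    simp
  · apply le_of_forall_pos_le_add
    intro ε hε
    set δ := min (ε / 4) (‖u‖ / 2) with hδdef
    have hδ : 0 < δ := lt_min (by linarith) (by have := norm_pos_iff.mpr hu; linarith)
    have hδu : δ ≤ ‖u‖ / 2 := min_le_right _ _
    have hδε : δ ≤ ε / 4 := min_le_left _ _
    have humem : u ∈ closure (R : Set U) := by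
      have : u ∈ R.topologicalClosure := hdense ▸ Submodule.mem_top
      exact this
    rw [Metric.mem_closure_iff] at humem
    obtain ⟨v, hvR, hvd⟩ := humem δ hδ
    obtain ⟨w, rfl⟩ := hvR
    have hTw : Tlin w = Ts w := rfl
    rw [hTw] at hvd
    have hdist : ‖u - Ts w‖ < δ := by rwa [dist_eq_norm] at hvd
    have hnTw : ‖u‖ - δ ≤ ‖Ts w‖ := by
      have : ‖u‖ ≤ ‖Ts w‖ + ‖u - Ts w‖ := by
        calc ‖u‖ = ‖Ts w + (u - Ts w)‖ := congrArg norm (by abel)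
          _ ≤ ‖Ts w‖ + ‖u - Ts w‖ := norm_add_le _ _
      linarith
    have hpos : 0 < ‖Ts w‖ := by
      have : 0 < ‖u‖ := norm_pos_iff.mpr hu
      linarith
    have hw0 : w ≠ 0 := by
      intro h
      rw [h, hTs0, norm_zero] at hpos
      exact lt_irrefl 0 hpos
    have hTwu : ‖Ts w‖ ≤ ‖u‖ + δ := by
      have : ‖Ts w‖ ≤ ‖u‖ + ‖u - Ts w‖ := by
        calc ‖Ts w‖ = ‖u - (u - Ts w)‖ := congrArg norm (by abel)
          _ ≤ ‖u‖ + ‖u - Ts w‖ := norm_sub_le _ _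
      linarith
    have h1 : ⟪u - Ts w, u⟫ ≤ δ * ‖u‖ := by
      calc ⟪u - Ts w, u⟫ ≤ ‖u - Ts w‖ * ‖u‖ := real_inner_le_norm _ _
        _ ≤ δ * ‖u‖ := by nlinarith [norm_nonneg u]
    have h2 : ⟪Ts w, u⟫ = ⟪u, u⟫ - ⟪u - Ts w, u⟫ := by
      rw [inner_sub_left]; ring
    have h3 : ⟪u, u⟫ = ‖u‖ ^ 2 := real_inner_self_eq_norm_sq u
    have hterm : ‖u‖ - 2 * δ ≤ B w u / ‖Ts w‖ := by
      rw [← hTs, le_div_iff₀ hpos]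
      nlinarith [norm_nonneg u]
    have hle : B w u / ‖Ts w‖ ≤ ⨆ w : {w : W // w ≠ 0}, B w.1 u / ‖Ts w.1‖ :=
      le_ciSup hbdd ⟨w, hw0⟩
    linarith
end

section
/- Under the conditions of the preceding setting, the operator T* : W → U is surjective. -/
open scoped RealInnerProductSpace

theorem stmt10 {U W : Type*}
    [NormedAddCommGroup U] [InnerProductSpace ℝ U] [CompleteSpace U]
    [NormedAddCommGroup W] [InnerProductSpace ℝ W] [CompleteSpace W]
    (B : W →ₗ[ℝ] U →ₗ[ℝ] ℝ) (C₁ C₂ C₃ : ℝ)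
    (hC₁ : 0 < C₁) (hC₂ : 0 < C₂) (hC₃ : 0 < C₃)
    (hB : ∀ (w : W) (u : U), B w u ≤ C₁ * ‖w‖ * ‖u‖)
    (hinfsup₂ : ∀ w : W, C₂ * ‖w‖ ≤ ⨆ u : {u : U // u ≠ 0}, B w u.1 / ‖u.1‖)
    (hinfsup₃ : ∀ u : U, C₃ * ‖u‖ ≤ ⨆ w : {w : W // w ≠ 0}, B w.1 u / ‖w.1‖)
    (Ts : W → U) (hTs : ∀ (w : W) (u : U), ⟪Ts w, u⟫ = B w u) :
    Function.Surjective Ts := by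
  -- Ts is linear
  have hadd : ∀ w₁ w₂ : W, Ts (w₁ + w₂) = Ts w₁ + Ts w₂ := by
    intro w₁ w₂
    apply ext_inner_right ℝ
    intro u
    rw [inner_add_left, hTs, hTs, hTs, map_add, LinearMap.add_apply]
  have hsmul : ∀ (c : ℝ) (w : W), Ts (c • w) = c • Ts w := by
    intro c w
    apply ext_inner_right ℝ
    intro u
    rw [inner_smul_left, hTs, hTs, map_smul, LinearMap.smul_apply]
    simp
  set Tl : W →ₗ[ℝ] U := { toFun := Ts, map_add' := hadd, map_smul' := hsmul } with hTl
  -- boundedness: ‖Ts w‖ ≤ C₁ ‖w‖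
  have hbound : ∀ w : W, ‖Ts w‖ ≤ C₁ * ‖w‖ := by
    intro w
    rcases eq_or_ne (Ts w) 0 with h | h
    · rw [h, norm_zero]; positivity
    · have h1 : ‖Ts w‖ * ‖Ts w‖ = B w (Ts w) := by
        rw [← hTs]; rw [real_inner_self_eq_norm_mul_norm]
      have h2 := hB w (Ts w)
      have hpos : 0 < ‖Ts w‖ := norm_pos_iff.mpr h
      nlinarith
  set T : W →L[ℝ] U := Tl.mkContinuous C₁ hbound with hT
  have hTfun : ∀ w, T w = Ts w := fun w => rfl
  -- lower bound: C₂ ‖w‖ ≤ ‖Ts w‖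
  have hlow : ∀ w : W, C₂ * ‖w‖ ≤ ‖T w‖ := by
    intro w
    refine le_trans (hinfsup₂ w) (Real.iSup_le (fun u => ?_) (norm_nonneg _))
    have hu : (0:ℝ) < ‖u.1‖ := norm_pos_iff.mpr u.2
    rw [div_le_iff₀ hu, ← hTs]
    calc ⟪Ts w, u.1⟫ ≤ ‖Ts w‖ * ‖u.1‖ := real_inner_le_norm _ _
      _ = ‖T w‖ * ‖u.1‖ := by rw [hTfun]
  -- antilipschitz, closed range
  have hanti : AntilipschitzWith (C₂⁻¹).toNNReal T := by
    refine T.antilipschitz_of_bound fun x => ?_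
    rw [Real.coe_toNNReal _ (le_of_lt (inv_pos.mpr hC₂))]
    rw [inv_mul_eq_div, le_div_iff₀ hC₂, mul_comm]
    exact hlow x
  have hclosed : IsClosed (Set.range Ts : Set U) := by
    have := hanti.isClosed_range T.uniformContinuous
    convert this using 2
    exact (funext hTfun).symm
  -- the range as a submodule
  have hrange : (LinearMap.range Tl : Set U) = Set.range Ts := by
    ext x; simp [hTl]
  have hclosed' : IsClosed ((LinearMap.range Tl : Submodule ℝ U) : Set U) := by
    rw [hrange]; exact hclosed
  haveI : CompleteSpace (LinearMap.range Tl) := hclosed'.completeSpace_coe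
  -- orthogonal complement is trivial
  have horth : (LinearMap.range Tl)ᗮ = ⊥ := by
    rw [Submodule.eq_bot_iff]
    intro u hu
    have hzero : ∀ w : W, B w u = 0 := by
      intro w
      rw [← hTs]
      exact hu (Ts w) ⟨w, rfl⟩
    have hsup : (⨆ w : {w : W // w ≠ 0}, B w.1 u / ‖w.1‖) ≤ 0 :=
      Real.iSup_le (fun w => by rw [hzero]; simp) le_rfl
    have := le_trans (hinfsup₃ u) hsup
    have : ‖u‖ ≤ 0 := by nlinarith
    simpa [norm_le_zero_iff] using this
  have htop : LinearMap.range Tl = ⊤ := by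
    rwa [← Submodule.orthogonal_eq_bot_iff]
  intro u
  have : u ∈ LinearMap.range Tl := htop ▸ Submodule.mem_top
  obtain ⟨w, hw⟩ := this
  exact ⟨w, hw⟩
end

section
/- Suppose u ∈ U satisfies B(w,u) = L(w) for all w ∈ W and u_n is the Petrov-Galerkin solution with optimal test functions over U_n ⊆ U. If B satisfies continuity (C₁) and both inf-sup conditions (C₂, C₃ > 0), then ‖u − u_n‖_U ≤ (C₁/C₃) · inf_{v ∈ U_n} ‖u − v‖_U. -/
open scoped RealInnerProductSpace

theorem stmt19 {U W : Type*}
    [NormedAddCommGroup U] [InnerProductSpace ℝ U] [CompleteSpace U]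
    [NormedAddCommGroup W] [InnerProductSpace ℝ W] [CompleteSpace W]
    (B : W →ₗ[ℝ] U →ₗ[ℝ] ℝ) (C₁ C₂ C₃ : ℝ)
    (hC₁ : 0 < C₁) (hC₂ : 0 < C₂) (hC₃ : 0 < C₃)
    (hB : ∀ (w : W) (u : U), B w u ≤ C₁ * ‖w‖ * ‖u‖)
    (hinfsup₂ : ∀ w : W, C₂ * ‖w‖ ≤ ⨆ u : {u : U // u ≠ 0}, B w u.1 / ‖u.1‖)
    (hinfsup₃ : ∀ u : U, C₃ * ‖u‖ ≤ ⨆ w : {w : W // w ≠ 0}, B w.1 u / ‖w.1‖)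
    (L : W →L[ℝ] ℝ)
    (T : U →ₗ[ℝ] W) (hT : ∀ (w : W) (u : U), ⟪w, T u⟫ = B w u)
    (n : ℕ) (e : Fin n → U) (u uₙ : U)
    (hu : ∀ w : W, B w u = L w)
    (huₙ_mem : uₙ ∈ Submodule.span ℝ (Set.range e))
    (huₙ : ∀ i : Fin n, B (T (e i)) uₙ = L (T (e i))) :
    ∀ v ∈ Submodule.span ℝ (Set.range e),
      ‖u - uₙ‖ ≤ (C₁ / C₃) * ‖u - v‖ := by
  -- lower bound: C₃‖x‖ ≤ ‖T x‖
  have hlow : ∀ x : U, C₃ * ‖x‖ ≤ ‖T x‖ := by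
    intro x
    refine (hinfsup₃ x).trans (Real.iSup_le ?_ (norm_nonneg _))
    rintro ⟨w, hw⟩
    rw [← hT]
    have hwpos : (0 : ℝ) < ‖w‖ := norm_pos_iff.mpr hw
    rw [div_le_iff₀ hwpos]
    calc ⟪w, T x⟫ ≤ ‖w‖ * ‖T x‖ := real_inner_le_norm w (T x)
      _ = ‖T x‖ * ‖w‖ := mul_comm _ _
  -- upper bound: ‖T x‖ ≤ C₁‖x‖
  have hup : ∀ x : U, ‖T x‖ ≤ C₁ * ‖x‖ := by
    intro x
    rcases eq_or_ne (T x) 0 with h | h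
    · rw [h, norm_zero]; positivity
    · have hpos : (0 : ℝ) < ‖T x‖ := norm_pos_iff.mpr h
      have : ‖T x‖ * ‖T x‖ ≤ (C₁ * ‖x‖) * ‖T x‖ := by
        calc ‖T x‖ * ‖T x‖ = ⟪T x, T x⟫ := (real_inner_self_eq_norm_mul_norm (T x)).symm
          _ = B (T x) x := hT _ _
          _ ≤ C₁ * ‖T x‖ * ‖x‖ := hB _ _
          _ = (C₁ * ‖x‖) * ‖T x‖ := by ring
      exact le_of_mul_le_mul_right this hpos
  -- Galerkin orthogonality
  have horth : ∀ v ∈ Submodule.span ℝ (Set.range e), ⟪T v, T (u - uₙ)⟫ = 0 := by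
    intro v hv
    induction hv using Submodule.span_induction with
    | mem x hx =>
      obtain ⟨i, rfl⟩ := hx
      rw [hT, map_sub, hu, huₙ i, sub_self]
    | zero => simp
    | add x y _ _ hx hy => rw [map_add, inner_add_left, hx, hy, add_zero]
    | smul c x _ hx => rw [map_smul, real_inner_smul_left, hx, mul_zero]
  intro v hv
  have hkey : ‖T (u - uₙ)‖ ≤ ‖T (u - v)‖ := by
    have hmem : v - uₙ ∈ Submodule.span ℝ (Set.range e) :=
      Submodule.sub_mem _ hv huₙ_mem
    have hdecomp : (u : U) - uₙ = (u - v) + (v - uₙ) := by abel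
    have h1 : ‖T (u - uₙ)‖ * ‖T (u - uₙ)‖ = ⟪T (u - v), T (u - uₙ)⟫ := by
      rw [← real_inner_self_eq_norm_mul_norm]
      nth_rewrite 2 [hdecomp]
      have h0 : ⟪T (u - uₙ), T (v - uₙ)⟫ = 0 := by
        rw [real_inner_comm]; exact horth _ hmem
      rw [map_add, inner_add_right, h0, add_zero]
      exact real_inner_comm _ _
    rcases eq_or_ne (T (u - uₙ)) 0 with h | h
    · rw [h, norm_zero]; exact norm_nonneg _
    · have hpos : (0 : ℝ) < ‖T (u - uₙ)‖ := norm_pos_iff.mpr h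
      have h2 : ‖T (u - uₙ)‖ * ‖T (u - uₙ)‖ ≤ ‖T (u - v)‖ * ‖T (u - uₙ)‖ := by
        rw [h1]; exact real_inner_le_norm _ _
      exact le_of_mul_le_mul_right h2 hpos
  have : C₃ * ‖u - uₙ‖ ≤ C₁ * ‖u - v‖ :=
    (hlow (u - uₙ)).trans (hkey.trans (hup (u - v)))
  rw [div_mul_eq_mul_div, le_div_iff₀ hC₃, mul_comm]
  linarith
end
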